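/- Let π be a Weil q-number of weight 1 such that ℚ(π) has a non-real complex embedding. Then β := π + q/π is a totally real algebraic integer, and π is a root of T² - βT + q where ψ(β² - 4q) < 0 for every embedding ψ of ℚ(β) into ℝ. -/

import Mathlib

open Polynomial

set_option maxHeartbeats 1600000
set_option synthInstance.maxHeartbeats 400000

/-- If `π` is a Weil `q`-number of weight 1 such that `ℚ(π)` has a non-real complex
embedding (equivalently, some conjugate of `π` is non-real), then `β := π + q/π` is a
totally real algebraic integer, `π` is a root of `T² - βT + q`, and `ψ(β² - 4q) < 0` for
every embedding `ψ : ℚ(β) → ℝ` (equivalently, every real conjugate `x` of `β` has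
`x² - 4q < 0`). -/
theorem stmt2 (q : ℕ) (hq : IsPrimePow q) (π : ℂ) (hπ0 : π ≠ 0)
    (hint : IsIntegral ℤ π)
    (habs : ∀ z : ℂ, Polynomial.aeval z (minpoly ℚ π) = 0 → ‖z‖ = Real.sqrt q)
    (hnonreal : ∃ z : ℂ, Polynomial.aeval z (minpoly ℚ π) = 0 ∧ z.im ≠ 0) :
    IsIntegral ℤ (π + (q : ℂ) / π) ∧
    (∀ z : ℂ, Polynomial.aeval z (minpoly ℚ (π + (q : ℂ) / π)) = 0 → z.im = 0) ∧
    (π ^ 2 - (π + (q : ℂ) / π) * π + (q : ℂ) = 0) ∧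
    (∀ x : ℝ, Polynomial.aeval (x : ℂ) (minpoly ℚ (π + (q : ℂ) / π)) = 0 →
      x ^ 2 - 4 * (q : ℝ) < 0) := by
  have hπint : IsIntegral ℚ π := hint.tower_top
  have hq0 : 0 < q := hq.pos
  have hqR : (0:ℝ) < q := by exact_mod_cast hq0
  set β : ℂ := π + (q:ℂ)/π with hβ
  -- normSq of any root is q
  have hnsq : ∀ w : ℂ, ‖w‖ = Real.sqrt q → Complex.normSq w = q := by
    intro w hw
    have h1 : ‖w‖ ^ 2 = Real.sqrt q ^ 2 := by rw [hw]
    rwa [Real.sq_sqrt hqR.le, Complex.sq_norm] at h1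
  have hdivconj : ∀ w : ℂ, ‖w‖ = Real.sqrt q → (q:ℂ)/w = (starRingEnd ℂ) w := by
    intro w hw
    have hw0 : w ≠ 0 := by
      intro h
      rw [h, norm_zero] at hw
      have := Real.sqrt_pos.mpr hqR
      linarith [hw]
    have hq' : w * (starRingEnd ℂ) w = (q:ℂ) := by
      rw [Complex.mul_conj]
      exact_mod_cast congrArg (fun r : ℝ => (r : ℂ)) (hnsq w hw)
    field_simp
    rw [← hq']
  -- every root of minpoly ℚ π is non-real
  have hnrall : ∀ w : ℂ, Polynomial.aeval w (minpoly ℚ π) = 0 → w.im ≠ 0 := by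
    intro w hw him
    obtain ⟨z₀, hz₀, hz₀im⟩ := hnonreal
    have hwc : (starRingEnd ℂ) w = w := Complex.conj_eq_iff_im.mpr him
    have hns : Complex.normSq w = q := hnsq w (habs w hw)
    have hw2 : w ^ 2 = (q:ℂ) := by
      have h1 : w * (starRingEnd ℂ) w = ((Complex.normSq w : ℝ) : ℂ) := Complex.mul_conj w
      rw [hwc, hns] at h1
      rw [sq, h1]
      norm_cast
    have hmin : minpoly ℚ w = minpoly ℚ π :=
      (minpoly.eq_of_irreducible_of_monic (minpoly.irreducible hπint) hw
        (minpoly.monic hπint)).symm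
    have hdvd : minpoly ℚ π ∣ ((X : ℚ[X]) ^ 2 - C (q:ℚ)) := by
      rw [← hmin]
      apply minpoly.dvd
      simp [hw2]
    obtain ⟨c, hc⟩ := hdvd
    have hz₀2 : z₀ ^ 2 = (q:ℂ) := by
      have h2 : Polynomial.aeval z₀ ((X : ℚ[X]) ^ 2 - C (q:ℚ)) = 0 := by
        rw [hc, map_mul, hz₀, zero_mul]
      have h3 : z₀ ^ 2 - (q:ℂ) = 0 := by simpa using h2
      linear_combination h3
    have h1 : (z₀ ^ 2).im = 0 := by rw [hz₀2]; simp
    have h2 : (z₀ ^ 2).re = q := by rw [hz₀2]; simp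
    rw [sq, Complex.mul_im] at h1
    rw [sq, Complex.mul_re] at h2
    have hre : z₀.re = 0 := by
      rcases mul_eq_zero.mp (by linarith : z₀.re * z₀.im = 0) with h | h
      · exact h
      · exact absurd h hz₀im
    rw [hre] at h2
    nlinarith [sq_nonneg z₀.im]
  -- q/π = conj π, so β is integral over ℤ
  have habsπ : ‖π‖ = Real.sqrt q := habs π (minpoly.aeval ℚ π)
  have hqdiv : (q:ℂ)/π = (starRingEnd ℂ) π := hdivconj π habsπ
  have hint1 : IsIntegral ℤ β := by
    rw [hβ, hqdiv]
    exact hint.add (hint.map (starRingEnd ℂ).toIntAlgHom)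
  have hβint : IsIntegral ℚ β := hint1.tower_top
  -- β ∈ ℚ⟮π⟯
  have hβmem : β ∈ IntermediateField.adjoin ℚ {π} := by
    have hπm : π ∈ IntermediateField.adjoin ℚ {π} :=
      IntermediateField.mem_adjoin_simple_self ℚ π
    exact add_mem hπm (div_mem (IntermediateField.natCast_mem _ q) hπm)
  -- key: any root of minpoly ℚ β has the form w + conj w for a root w of minpoly ℚ π
  have key : ∀ z : ℂ, Polynomial.aeval z (minpoly ℚ β) = 0 → ∃ w : ℂ,
      Polynomial.aeval w (minpoly ℚ π) = 0 ∧ z = w + (starRingEnd ℂ) w := by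
    intro z hz
    haveI : Fact (Irreducible (minpoly ℚ β)) := ⟨minpoly.irreducible hβint⟩
    set K := AdjoinRoot (minpoly ℚ β) with hK
    -- β as an element of ℚ⟮π⟯ is a root of minpoly ℚ β
    have h1 : Polynomial.aeval (⟨β, hβmem⟩ : IntermediateField.adjoin ℚ {π}) (minpoly ℚ β) = 0 := by
      apply (IntermediateField.adjoin ℚ {π}).val.toRingHom.injective
      have h2 := Polynomial.aeval_algHom_apply (IntermediateField.adjoin ℚ {π}).val
        (⟨β, hβmem⟩ : IntermediateField.adjoin ℚ {π}) (minpoly ℚ β)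
      have h3 : (IntermediateField.adjoin ℚ {π}).val (⟨β, hβmem⟩ :
        IntermediateField.adjoin ℚ {π}) = β := rfl
      rw [h3, minpoly.aeval] at h2
      simpa using h2.symm
    let θ : K →ₐ[ℚ] (IntermediateField.adjoin ℚ {π}) := AdjoinRoot.liftAlgHom (minpoly ℚ β) (Algebra.ofId ℚ _) _ h1
    let ψ : K →ₐ[ℚ] ℂ := AdjoinRoot.liftAlgHom (minpoly ℚ β) (Algebra.ofId ℚ _) z hz
    letI : Algebra K (IntermediateField.adjoin ℚ {π}) := θ.toRingHom.toAlgebra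
    letI : Algebra K ℂ := ψ.toRingHom.toAlgebra
    haveI t1 : IsScalarTower ℚ K (IntermediateField.adjoin ℚ {π}) :=
      IsScalarTower.of_algebraMap_eq fun r => (θ.commutes r).symm
    haveI t2 : IsScalarTower ℚ K ℂ :=
      IsScalarTower.of_algebraMap_eq fun r => (ψ.commutes r).symm
    haveI : FiniteDimensional ℚ (IntermediateField.adjoin ℚ {π}) :=
      IntermediateField.adjoin.finiteDimensional hπint
    haveI : FiniteDimensional K (IntermediateField.adjoin ℚ {π}) :=
      FiniteDimensional.right ℚ _ _
    haveI : Algebra.IsAlgebraic K (IntermediateField.adjoin ℚ {π}) :=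
      Algebra.IsAlgebraic.of_finite _ _
    let σ : (IntermediateField.adjoin ℚ {π}) →ₐ[K] ℂ := IsAlgClosed.lift
    set πe : IntermediateField.adjoin ℚ {π} := IntermediateField.AdjoinSimple.gen ℚ π with hπe
    set w : ℂ := σ πe with hwdef
    have hwroot : Polynomial.aeval w (minpoly ℚ π) = 0 := by
      have h0 : Polynomial.aeval πe (minpoly ℚ π) = 0 := IntermediateField.aeval_gen_minpoly ℚ π
      have h4 := Polynomial.aeval_algHom_apply (σ.restrictScalars ℚ) πe (minpoly ℚ π)
      rw [h0, map_zero] at h4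
      exact h4
    refine ⟨w, hwroot, ?_⟩
    have hσβ : σ (⟨β, hβmem⟩ : IntermediateField.adjoin ℚ {π}) = z := by
      have h5 : algebraMap K (IntermediateField.adjoin ℚ {π}) (AdjoinRoot.root (minpoly ℚ β)) =
          (⟨β, hβmem⟩ : IntermediateField.adjoin ℚ {π}) :=
        AdjoinRoot.liftAlgHom_root _ _ _ h1
      have h6 : algebraMap K ℂ (AdjoinRoot.root (minpoly ℚ β)) = z :=
        AdjoinRoot.liftAlgHom_root _ _ _ hz
      rw [← h5, σ.commutes, h6]
    have hπe0 : πe ≠ 0 := by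
      intro h
      apply hπ0
      have := congrArg (algebraMap (IntermediateField.adjoin ℚ {π}) ℂ) h
      simpa [hπe] using this
    have hsplit : (⟨β, hβmem⟩ : IntermediateField.adjoin ℚ {π}) = πe + (q : _)/πe := by
      apply Subtype.ext
      push_cast [hπe]
      rfl
    rw [hsplit, map_add, map_div₀, map_natCast] at hσβ
    have hwabs : ‖w‖ = Real.sqrt q := habs w hwroot
    rw [hdivconj w hwabs] at hσβ
    exact hσβ.symm
  refine ⟨hint1, ?_, ?_, ?_⟩
  · intro z hz
    obtain ⟨w, hwroot, hzw⟩ := key z hz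
    rw [hzw, Complex.add_im, Complex.conj_im]
    ring
  · rw [hβ]
    field_simp
    ring
  · intro x hx
    obtain ⟨w, hwroot, hzw⟩ := key (x : ℂ) hx
    have him : w.im ≠ 0 := hnrall w hwroot
    have hns : Complex.normSq w = q := hnsq w (habs w hwroot)
    have hxre : x = w.re + w.re := by
      have := congrArg Complex.re hzw
      simpa using this
    rw [Complex.normSq_apply] at hns
    have him2 : 0 < w.im * w.im := mul_self_pos.mpr him
    rw [hxre]
    nlinarith
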